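/- For all integers s ≥ 0 and t ≥ 0, the chain [2^s, 3, 2^t, s+3] (s entries 2, then a 3, then t entries 2, then one entry s+3, of length r = s+t+2) has Hirzebruch–Jung continued fraction (t+2)(s+2)² / ((t+2)(s+2)(s+1) − 1); hence it is a T-chain with parameters (d, n, a) = (t+2, s+2, s+1). -/

import Mathlib

/-- Hirzebruch–Jung continued fraction of a list of integers:
`hjcf [] = 0` (junk value), `hjcf (b :: l) = b - 1 / hjcf l`.
Since `(0 : ℚ)⁻¹ = 0`, this gives `hjcf [b] = b`, matching the recursion
`[b_r] = b_r`, `[b_1, …, b_r] = b_1 − 1/[b_2, …, b_r]`. -/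
def hjcf : List ℤ → ℚ
  | [] => 0
  | b :: l => (b : ℚ) - (hjcf l)⁻¹

/-- `IsTChain l d n a` : the nonempty list `l` of integers, all ≥ 2, is a T-chain
with parameters `(d, n, a)`, i.e. its Hirzebruch–Jung continued fraction equals
`d n² / (d n a − 1)` where `d ≥ 1`, `n ≥ 2`, `0 < a < n`, `gcd(n, a) = 1`. -/
def IsTChain (l : List ℤ) (d n a : ℤ) : Prop :=
  l ≠ [] ∧ (∀ b ∈ l, 2 ≤ b) ∧
  1 ≤ d ∧ 2 ≤ n ∧ 0 < a ∧ a < n ∧ Int.gcd n a = 1 ∧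
  hjcf l = (d * n ^ 2 : ℚ) / (d * n * a - 1)

lemma hjcf_rep (p q : ℚ) (hq : 0 < q) (hpq : q < p) (l : List ℤ) (hl : hjcf l = p / q) :
    ∀ k : ℕ, hjcf (List.replicate k 2 ++ l)
      = (((k : ℚ) + 1) * p - (k : ℚ) * q) / ((k : ℚ) * p - ((k : ℚ) - 1) * q) := by
  intro k
  induction k with
  | zero => simpa using hl
  | succ k ih =>
      have hN : 0 < ((k : ℚ) + 1) * p - (k : ℚ) * q := by nlinarith [Nat.cast_nonneg (α := ℚ) k]
      have hD : 0 < (k : ℚ) * p - ((k : ℚ) - 1) * q := by nlinarith [Nat.cast_nonneg (α := ℚ) k]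
      have : List.replicate (k + 1) 2 ++ l = (2 : ℤ) :: (List.replicate k 2 ++ l) := by
        simp [List.replicate_succ]
      rw [this, hjcf, ih]
      push_cast
      rw [inv_div, sub_div' hN.ne', div_eq_div_iff hN.ne' (by nlinarith [Nat.cast_nonneg (α := ℚ) k] : (0:ℚ) < (↑k + 1) * p - (↑k + 1 - 1) * q).ne']
      ring

/-- For s, t ≥ 0, the chain [2^s, 3, 2^t, s+3] has HJ continued
fraction (t+2)(s+2)² / ((t+2)(s+2)(s+1) − 1), hence is a T-chain with
parameters (t+2, s+2, s+1). -/
theorem general_tchain (s t : ℕ) :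
    let c : List ℤ := List.replicate s 2 ++ 3 :: (List.replicate t 2 ++ [(s : ℤ) + 3])
    hjcf c = ((t : ℚ) + 2) * ((s : ℚ) + 2) ^ 2 /
      (((t : ℚ) + 2) * ((s : ℚ) + 2) * ((s : ℚ) + 1) - 1) ∧
    IsTChain c ((t : ℤ) + 2) ((s : ℤ) + 2) ((s : ℤ) + 1) := by
  intro c
  have hs : (0:ℚ) ≤ (s:ℚ) := Nat.cast_nonneg s
  have ht : (0:ℚ) ≤ (t:ℚ) := Nat.cast_nonneg t
  have h0 : hjcf [(s : ℤ) + 3] = ((s:ℚ) + 3) / 1 := by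
    simp [hjcf]
  have h1 := hjcf_rep ((s:ℚ)+3) 1 one_pos (by linarith) _ h0 t
  -- value of 3 :: (2^t ++ [s+3])
  have hNt : (0:ℚ) < ((t:ℚ)+1) * ((s:ℚ)+3) - (t:ℚ) * 1 := by nlinarith
  have hQ : (0:ℚ) < ((t:ℚ)+1) * ((s:ℚ)+2) + 1 := by nlinarith
  have hP : (0:ℚ) < ((2*(t:ℚ)+3) * ((s:ℚ)+2) + 2) := by nlinarith
  have hmid : hjcf ((3:ℤ) :: (List.replicate t 2 ++ [(s : ℤ) + 3]))
      = ((2*(t:ℚ)+3) * ((s:ℚ)+2) + 2) / (((t:ℚ)+1) * ((s:ℚ)+2) + 1) := by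
    rw [hjcf, h1]
    push_cast
    rw [inv_div, sub_div' hNt.ne', div_eq_div_iff hNt.ne' hQ.ne']
    ring
  have hfin := hjcf_rep _ _ hQ (by nlinarith) _ hmid s
  have hc : hjcf c = ((t : ℚ) + 2) * ((s : ℚ) + 2) ^ 2 /
      (((t : ℚ) + 2) * ((s : ℚ) + 2) * ((s : ℚ) + 1) - 1) := by
    show hjcf (List.replicate s 2 ++ (3:ℤ) :: (List.replicate t 2 ++ [(s : ℤ) + 3])) = _
    rw [hfin]
    congr 1 <;> ring
  refine ⟨hc, ?_, ?_, by omega, by omega, by omega, by omega, ?_, ?_⟩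
  · simp [c]
  · intro b hb
    simp only [c, List.mem_append, List.mem_cons, List.mem_replicate, List.mem_singleton] at hb
    rcases hb with ⟨-, rfl⟩ | rfl | ⟨-, rfl⟩ | rfl | h <;> simp_all <;> omega
  · have h2 : ((s:ℤ)+2) = ((s+2:ℕ):ℤ) := by push_cast; ring
    have h3 : ((s:ℤ)+1) = ((s+1:ℕ):ℤ) := by push_cast; ring
    rw [h2, h3, Int.gcd_natCast_natCast]
    conv_lhs => rw [show s+2 = 1 + (s+1) by omega, Nat.gcd_add_self_left]
    simp
  · rw [hc]; push_cast; ring_nf
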